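/- The function f : ℝ² → ℝ defined by f(x,y) = sin(1/x) for x > 0 and f(x,y) = 1 for x ≤ 0 is Fσ-measurable: the preimage of every open subset of ℝ is an Fσ subset of ℝ². -/

import Mathlib

/-- A set is Fσ if it is a countable union of closed sets. -/
def IsFsigma {X : Type*} [TopologicalSpace X] (s : Set X) : Prop :=
  ∃ F : ℕ → Set X, (∀ n, IsClosed (F n)) ∧ s = ⋃ n, F n

lemma isFsigma_of_isOpen {X : Type*} [PseudoEMetricSpace X] {U : Set X}
    (hU : IsOpen U) : IsFsigma U := by
  refine ⟨fun n => {x | (1 : ENNReal) / (n + 1) ≤ EMetric.infEdist x Uᶜ}, fun n => ?_, ?_⟩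
  · exact isClosed_le continuous_const (EMetric.continuous_infEdist)
  · ext x
    simp only [Set.mem_iUnion, Set.mem_setOf_eq]
    constructor
    · intro hx
      have hx' : EMetric.infEdist x Uᶜ ≠ 0 := by
        intro h
        have : x ∈ closure Uᶜ := EMetric.mem_closure_iff_infEdist_zero.mpr h
        rw [hU.isClosed_compl.closure_eq] at this
        exact this hx
      obtain ⟨n, hn⟩ := ENNReal.exists_inv_nat_lt hx'
      refine ⟨n, le_of_lt (lt_of_le_of_lt ?_ hn)⟩
      rw [one_div]
      exact ENNReal.inv_le_inv.mpr (by norm_cast; omega)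
    · rintro ⟨n, hn⟩
      by_contra hx
      have : EMetric.infEdist x Uᶜ = 0 := by
        exact EMetric.mem_closure_iff_infEdist_zero.mp (by rw [hU.isClosed_compl.closure_eq]; exact hx)
      rw [this] at hn
      simp [ENNReal.div_eq_top] at hn

theorem stmt12 (f : ℝ × ℝ → ℝ)
    (hf : ∀ p : ℝ × ℝ, f p = if p.1 > 0 then Real.sin (1 / p.1) else 1) :
    ∀ V : Set ℝ, IsOpen V → IsFsigma (f ⁻¹' V) := by
  intro V hV
  set A : Set (ℝ × ℝ) := {p | p.1 > 0} with hA
  have hAopen : IsOpen A := isOpen_lt continuous_const continuous_fst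
  -- the open piece
  have hg : ContinuousOn (fun p : ℝ × ℝ => Real.sin (1 / p.1)) A := by
    apply Real.continuous_sin.comp_continuousOn
    exact continuousOn_const.div continuous_fst.continuousOn (fun p hp => ne_of_gt hp)
  have hopen : IsOpen (A ∩ (fun p : ℝ × ℝ => Real.sin (1 / p.1)) ⁻¹' V) :=
    hg.isOpen_inter_preimage hAopen hV
  obtain ⟨F, hFc, hFu⟩ := isFsigma_of_isOpen hopen
  have hsplit : f ⁻¹' V = (A ∩ (fun p : ℝ × ℝ => Real.sin (1 / p.1)) ⁻¹' V) ∪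
      (f ⁻¹' V ∩ Aᶜ) := by
    ext p
    simp only [Set.mem_preimage, Set.mem_union, Set.mem_inter_iff, Set.mem_compl_iff, hf p,
      hA, Set.mem_setOf_eq]
    by_cases hp : p.1 > 0 <;> simp [hp]
  by_cases h1 : (1 : ℝ) ∈ V
  · have hAc : f ⁻¹' V ∩ Aᶜ = Aᶜ := by
      ext p
      simp only [Set.mem_inter_iff, Set.mem_preimage, Set.mem_compl_iff, hA, Set.mem_setOf_eq,
        hf p, and_iff_right_iff_imp]
      intro hp
      simp [hp, h1]
    refine ⟨fun n => F n ∪ Aᶜ, fun n => (hFc n).union hAopen.isClosed_compl, ?_⟩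
    rw [hsplit, hAc, hFu, Set.iUnion_union_distrib, Set.iUnion_const]
  · have hAc : f ⁻¹' V ∩ Aᶜ = ∅ := by
      ext p
      simp only [Set.mem_inter_iff, Set.mem_preimage, Set.mem_compl_iff, hA, Set.mem_setOf_eq,
        hf p, Set.mem_empty_iff_false, iff_false, not_and]
      intro hp hple
      simp [hple] at hp
      exact h1 hp
    refine ⟨F, hFc, ?_⟩
    rw [hsplit, hAc, hFu, Set.union_empty]
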